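/- With the substitution s(G) = YBG, s(Y) = YBG, s(B) = BO, s(O) = YBO, the length of sⁿ(G) equals F(2n+2), where F is the Fibonacci sequence with F(1) = F(2) = 1. -/

import Mathlib

inductive HepLetter : Type
  | G | Y | B | O
deriving DecidableEq

def hepSub : HepLetter → List HepLetter
  | HepLetter.G => [HepLetter.Y, HepLetter.B, HepLetter.G]
  | HepLetter.Y => [HepLetter.Y, HepLetter.B, HepLetter.G]
  | HepLetter.B => [HepLetter.B, HepLetter.O]
  | HepLetter.O => [HepLetter.Y, HepLetter.B, HepLetter.O]

def hepStep (w : List HepLetter) : List HepLetter := w.flatMap hepSub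

lemma hepStep_cons (a : HepLetter) (w : List HepLetter) :
    hepStep (a :: w) = hepSub a ++ hepStep w := by
  simp [hepStep]

lemma countB_step (w : List HepLetter) :
    (hepStep w).count HepLetter.B = w.length := by
  induction w with
  | nil => rfl
  | cons a w ih =>
    rw [hepStep_cons, List.count_append, ih]
    cases a <;> simp [hepSub, List.count_cons] <;> omega

lemma len_step (w : List HepLetter) :
    (hepStep w).length + w.count HepLetter.B = 3 * w.length := by
  induction w with
  | nil => rfl
  | cons a w ih =>
    rw [hepStep_cons, List.length_append, List.count_cons]
    cases a <;> simp [hepSub] <;> omega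

theorem hep_length_fib (n : ℕ) :
    (hepStep^[n] [HepLetter.G]).length = Nat.fib (2 * n + 2) := by
  have key : ∀ n, (hepStep^[n] [HepLetter.G]).length = Nat.fib (2 * n + 2) ∧
      (hepStep^[n] [HepLetter.G]).count HepLetter.B = Nat.fib (2 * n) := by
    intro n
    induction n with
    | zero => constructor <;> rfl
    | succ n ih =>
      obtain ⟨h1, h2⟩ := ih
      rw [Function.iterate_succ_apply']
      have hl := len_step (hepStep^[n] [HepLetter.G])
      have hc := countB_step (hepStep^[n] [HepLetter.G])
      constructor
      · have f1 : Nat.fib (2*n+4) = Nat.fib (2*n+3) + Nat.fib (2*n+2) := by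
          rw [show 2*n+4 = (2*n+2)+2 by ring, show 2*n+3 = (2*n+2)+1 by ring, Nat.fib_add_two, Nat.add_comm]
        have f2 : Nat.fib (2*n+3) = Nat.fib (2*n+2) + Nat.fib (2*n+1) := by
          rw [show 2*n+3 = (2*n+1)+2 by ring, show 2*n+2 = (2*n+1)+1 by ring, Nat.fib_add_two, Nat.add_comm]
        have f3 : Nat.fib (2*n+2) = Nat.fib (2*n+1) + Nat.fib (2*n) := by rw [Nat.fib_add_two, Nat.add_comm]
        rw [show 2*(n+1)+2 = 2*n+4 by ring]
        omega
      · rw [hc, h1, show 2*(n+1) = 2*n+2 by ring]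
  exact (key n).1
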